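/- Let X : H0 -> H1 be an everywhere-defined bounded solution of the Riccati equation A1 X - X A0 - X V X + V* = 0, and let L be a closed subspace of H0 with L ⊆ Ker(X V X - V*) that is invariant under both A0 and V X. Then L' = {x ⊕ Xx : x in L} is a subspace of H invariant under both the diagonal operator A, defined by A(x0 ⊕ x1) = A0 x0 ⊕ A1 x1, and the operator B. -/

import Mathlib

noncomputable section

/-- Let `X : H₀ → H₁` be a bounded solution of the Riccati equation
`A₁ X - X A₀ - X V X + V* = 0` and `L` a closed subspace of `H₀` with
`L ⊆ Ker (X V X - V*)` which is invariant under both `A₀` and `V X`.  Then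
`L' = {x ⊕ X x : x ∈ L}` is a subspace of `H = H₀ ⊕ H₁` invariant under both the diagonal
operator `A (x₀ ⊕ x₁) = A₀ x₀ ⊕ A₁ x₁` and the block operator `B`. -/
theorem graph_restriction_invariant_under_A_and_B
    {H0 H1 : Type*}
    [NormedAddCommGroup H0] [InnerProductSpace ℂ H0] [CompleteSpace H0]
    [TopologicalSpace.SeparableSpace H0]
    [NormedAddCommGroup H1] [InnerProductSpace ℂ H1] [CompleteSpace H1]
    [TopologicalSpace.SeparableSpace H1]
    (A0 : H0 →L[ℂ] H0) (A1 : H1 →L[ℂ] H1) (V : H1 →L[ℂ] H0)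
    (hA0 : IsSelfAdjoint A0) (hA1 : IsSelfAdjoint A1)
    (A B : H0 × H1 →L[ℂ] H0 × H1)
    (hA : ∀ u : H0 × H1, A u = (A0 u.1, A1 u.2))
    (hB : ∀ u : H0 × H1, B u = (A0 u.1 + V u.2, ContinuousLinearMap.adjoint V u.1 + A1 u.2))
    (X : H0 →L[ℂ] H1)
    (hX : A1.comp X - X.comp A0 - X.comp (V.comp X) + ContinuousLinearMap.adjoint V = 0)
    (L : Submodule ℂ H0) (hLclosed : IsClosed (L : Set H0))
    (hLker : L ≤ LinearMap.ker (X.comp (V.comp X) - ContinuousLinearMap.adjoint V).toLinearMap)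
    (hLA0 : L.map A0.toLinearMap ≤ L)
    (hLVX : L.map (V.comp X).toLinearMap ≤ L) :
    (∀ u ∈ L.map (LinearMap.prod LinearMap.id X.toLinearMap),
      A u ∈ L.map (LinearMap.prod LinearMap.id X.toLinearMap)) ∧
    (∀ u ∈ L.map (LinearMap.prod LinearMap.id X.toLinearMap),
      B u ∈ L.map (LinearMap.prod LinearMap.id X.toLinearMap)) := by

  have hker : ∀ x ∈ L, X (V (X x)) = ContinuousLinearMap.adjoint V x := by
    intro x hx
    have := hLker hx
    have h := LinearMap.mem_ker.mp this
    simpa [sub_eq_zero, ContinuousLinearMap.comp_apply] using h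
  have hric : ∀ x ∈ L, A1 (X x) = X (A0 x) := by
    intro x hx
    have h := congrArg (fun T : H0 →L[ℂ] H1 => T x) hX
    simp only [ContinuousLinearMap.sub_apply, ContinuousLinearMap.add_apply,
      ContinuousLinearMap.comp_apply, ContinuousLinearMap.zero_apply] at h
    have hk := hker x hx
    rw [hk] at h
    linear_combination (norm := abel) h
  constructor
  · rintro u ⟨x, hx, rfl⟩
    refine ⟨A0 x, hLA0 ⟨x, hx, rfl⟩, ?_⟩
    simp [hA, LinearMap.prod_apply, hric x hx]
  · rintro u ⟨x, hx, rfl⟩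
    refine ⟨A0 x + V (X x), ?_, ?_⟩
    · exact L.add_mem (hLA0 ⟨x, hx, rfl⟩) (hLVX ⟨x, hx, rfl⟩)
    · have : X (A0 x + V (X x)) = ContinuousLinearMap.adjoint V x + A1 (X x) := by
        rw [map_add, hric x hx, hker x hx]; abel
      simp [hB, LinearMap.prod_apply, this]


end
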